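/- Continuous modification of conditional expectations: Let (f(x))_{x∈𝕏} be a stochastic process on a complete metric, locally σ-compact space 𝕏, continuous in x for every ω, with (f(x))_{x∈K} uniformly integrable for every compact K ⊆ 𝕏, and suppose |f(ω,x₀) − f(ω,x₁)| ≤ H(x₀,x₁) for all ω, x₀, x₁, where H : 𝕏×𝕏 → [0,∞) is continuous with H(x,x) = 0. Then for any sub-σ-algebra 𝒢 there exists a (unique up to indistinguishability) 𝒢-measurable process (g(x))_{x∈𝕏}, continuous in x for every ω, such that ℙ(E[f(x)|𝒢] = g(x)) = 1 for every x ∈ 𝕏. -/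

import Mathlib

open MeasureTheory Filter Topology

/-- Continuous modification of conditional expectations: let `(f(x))_{x∈𝕏}` be a stochastic
process on a complete, locally σ-compact metric space `𝕏`, continuous in `x` for every `ω`,
uniformly integrable on every compact `K ⊆ 𝕏`, with increments dominated by a continuous
modulus `H` vanishing on the diagonal. Then for every sub-σ-algebra `𝒢` there is a process
`(g(x))_{x∈𝕏}`, continuous in `x` for every `ω`, `𝒢`-measurable in `ω` for every `x`, with
`ℙ(E[f(x)|𝒢] = g(x)) = 1` for every `x`, and `g` is unique up to indistinguishability. -/
theorem continuous_modification_condexp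
    {Ω : Type*} {m0 : MeasurableSpace Ω} {μ : Measure Ω} [IsProbabilityMeasure μ]
    {X : Type*} [MetricSpace X] [CompleteSpace X]
    (K : ℕ → Set X) (hKcompact : ∀ n, IsCompact (K n)) (hKmono : Monotone K)
    (hKcover : (⋃ n, interior (K n)) = Set.univ)
    (f : X → Ω → ℝ)
    (hfcont : ∀ ω, Continuous fun x => f x ω)
    (hfmeas : ∀ x, Integrable (f x) μ)
    (hfUI : ∀ C : Set X, IsCompact C → UnifIntegrable (fun x : C => f x) 1 μ)
    (H : X → X → ℝ) (hHcont : Continuous fun p : X × X => H p.1 p.2)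
    (hHnonneg : ∀ x y, 0 ≤ H x y) (hHdiag : ∀ x, H x x = 0)
    (hHdom : ∀ ω x₀ x₁, |f x₀ ω - f x₁ ω| ≤ H x₀ x₁)
    (m : MeasurableSpace Ω) (hm : m ≤ m0) :
    (∃ g : X → Ω → ℝ,
      (∀ ω, Continuous fun x => g x ω) ∧
      (∀ x, StronglyMeasurable[m] (g x)) ∧
      (∀ x, g x =ᵐ[μ] μ[f x | m]) ∧
      (∀ g' : X → Ω → ℝ,
        (∀ ω, Continuous fun x => g' x ω) →
        (∀ x, StronglyMeasurable[m] (g' x)) →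
        (∀ x, g' x =ᵐ[μ] μ[f x | m]) →
        ∀ᵐ ω ∂μ, ∀ x, g x ω = g' x ω)) := by
  classical
  -- `X` is separable
  haveI : TopologicalSpace.SeparableSpace X := by
    rw [← TopologicalSpace.isSeparable_univ_iff]
    have h : (Set.univ : Set X) ⊆ ⋃ n, K n := by
      rw [← hKcover]; exact Set.iUnion_mono fun n => interior_subset
    exact (TopologicalSpace.IsSeparable.iUnion fun n => (hKcompact n).isSeparable).mono h
  obtain ⟨D, hDcount, hDdense⟩ := TopologicalSpace.exists_countable_dense X
  -- the key a.e. bound on increments of conditional expectations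
  have key : ∀ x y : X, ∀ᵐ ω ∂μ, |(μ[f x | m]) ω - (μ[f y | m]) ω| ≤ H x y := by
    intro x y
    have hsub := condExp_sub (m := m) (μ := μ) (hfmeas x) (hfmeas y)
    have hupper : μ[f x - f y | m] ≤ᵐ[μ] fun _ => H x y := by
      have h := condExp_mono (m := m) (μ := μ) ((hfmeas x).sub (hfmeas y))
        (integrable_const (H x y))
        (Filter.Eventually.of_forall fun ω => (abs_le.1 (hHdom ω x y)).2)
      rwa [condExp_const hm] at h
    have hlower : (fun _ => -H x y) ≤ᵐ[μ] μ[f x - f y | m] := by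
      have h := condExp_mono (m := m) (μ := μ) (integrable_const (-H x y))
        ((hfmeas x).sub (hfmeas y))
        (Filter.Eventually.of_forall fun ω => (abs_le.1 (hHdom ω x y)).1)
      rwa [condExp_const hm] at h
    filter_upwards [hsub, hupper, hlower] with ω h1 h2 h3
    have : (μ[f x | m]) ω - (μ[f y | m]) ω = (μ[f x - f y | m]) ω := by
      simp only [h1, Pi.sub_apply]
    rw [this, abs_le]
    exact ⟨h3, h2⟩
  -- the good set
  set N : Set Ω := {ω | ∀ d ∈ D, ∀ d' ∈ D, |(μ[f d | m]) ω - (μ[f d' | m]) ω| ≤ H d d'}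
    with hN_def
  have hN_meas : MeasurableSet[m] N := by
    have : N = ⋂ d ∈ D, ⋂ d' ∈ D, {ω | |(μ[f d | m]) ω - (μ[f d' | m]) ω| ≤ H d d'} := by
      ext ω; simp [hN_def]
    rw [this]
    refine MeasurableSet.biInter hDcount fun d _ =>
      MeasurableSet.biInter hDcount fun d' _ => ?_
    exact measurableSet_le
      ((stronglyMeasurable_condExp.measurable.sub stronglyMeasurable_condExp.measurable).abs)
      measurable_const
  have hN_ae : ∀ᵐ ω ∂μ, ω ∈ N := by
    have h := (ae_ball_iff hDcount).2 fun d _ =>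
      (ae_ball_iff hDcount).2 fun d' _ => key d d'
    filter_upwards [h] with ω hω
    exact hω
  -- approximating sequences from the dense set
  have hseq : ∀ x : X, ∃ u : ℕ → X, (∀ n, u n ∈ D) ∧ Tendsto u atTop (𝓝 x) := fun x =>
    mem_closure_iff_seq_limit.1 (hDdense x)
  choose u hu_mem hu_tend using hseq
  -- H along pairs of the sequence tends to 0
  have hH2 : ∀ x : X, Tendsto (fun p : ℕ × ℕ => H (u x p.1) (u x p.2)) atTop (𝓝 0) := by
    intro x
    have h1 : Tendsto (fun p : ℕ × ℕ => (u x p.1, u x p.2)) atTop (𝓝 (x, x)) := by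
      rw [← prod_atTop_atTop_eq]
      exact ((hu_tend x).comp tendsto_fst).prodMk_nhds ((hu_tend x).comp tendsto_snd)
    have h2 := (hHcont.tendsto (x, x)).comp h1
    simpa [hHdiag, Function.comp_def] using h2
  -- Cauchy property on the good set
  have hcauchy : ∀ x : X, ∀ ω ∈ N, CauchySeq fun n => (μ[f (u x n) | m]) ω := by
    intro x ω hω
    rw [Metric.cauchySeq_iff]
    intro ε hε
    obtain ⟨P, hP⟩ := Filter.eventually_atTop.1 ((hH2 x).eventually_lt_const hε)
    refine ⟨max P.1 P.2, fun a ha b hb => ?_⟩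
    have hPa : (P.1, P.2) ≤ (a, b) :=
      ⟨le_trans (le_max_left _ _) ha, le_trans (le_max_right _ _) hb⟩
    calc dist ((μ[f (u x a) | m]) ω) ((μ[f (u x b) | m]) ω)
        = |(μ[f (u x a) | m]) ω - (μ[f (u x b) | m]) ω| := Real.dist_eq _ _
      _ ≤ H (u x a) (u x b) := hω _ (hu_mem x a) _ (hu_mem x b)
      _ < ε := hP (a, b) hPa
  -- the modification
  set g : X → Ω → ℝ := fun x ω =>
    if ω ∈ N then limUnder atTop (fun n => (μ[f (u x n) | m]) ω) else 0 with hg_def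
  have hglim : ∀ x : X, ∀ ω ∈ N,
      Tendsto (fun n => (μ[f (u x n) | m]) ω) atTop (𝓝 (g x ω)) := by
    intro x ω hω
    obtain ⟨L, hL⟩ := cauchySeq_tendsto_of_complete (hcauchy x ω hω)
    have : g x ω = L := by rw [hg_def]; simp only [if_pos hω]; exact hL.limUnder_eq
    rw [this]; exact hL
  -- increments of `g` dominated by `H` on the good set
  have hgH : ∀ ω ∈ N, ∀ x y : X, |g x ω - g y ω| ≤ H x y := by
    intro ω hω x y
    have h1 := ((hglim x ω hω).sub (hglim y ω hω)).abs
    have h2 : Tendsto (fun n => H (u x n) (u y n)) atTop (𝓝 (H x y)) := by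
      exact (hHcont.tendsto (x, y)).comp ((hu_tend x).prodMk_nhds (hu_tend y))
    exact le_of_tendsto_of_tendsto' h1 h2 fun n => hω _ (hu_mem x n) _ (hu_mem y n)
  -- continuity of `g` in `x`
  have hgcont : ∀ ω, Continuous fun x => g x ω := by
    intro ω
    by_cases hω : ω ∈ N
    · refine continuous_iff_continuousAt.2 fun x => ?_
      have hH0 : Tendsto (fun y => H y x) (𝓝 x) (𝓝 0) := by
        have h := (hHcont.tendsto (x, x)).comp
          ((continuous_id.prodMk continuous_const).tendsto x)
        simpa [hHdiag, Function.comp_def] using h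
      have h1 : Tendsto (fun y => g y ω - g x ω) (𝓝 x) (𝓝 0) :=
        squeeze_zero_norm (fun y => by simpa [Real.norm_eq_abs] using hgH ω hω y x) hH0
      have h2 := h1.add_const (g x ω)
      simpa [ContinuousAt] using h2
    · have : (fun x => g x ω) = fun _ => 0 := by
        funext x; rw [hg_def]; simp [if_neg hω]
      rw [this]; exact continuous_const
  -- measurability
  have hgmeas : ∀ x, StronglyMeasurable[m] (g x) := by
    intro x
    have hn : ∀ n : ℕ, StronglyMeasurable[m]
        fun ω => if ω ∈ N then (μ[f (u x n) | m]) ω else 0 := fun n =>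
      StronglyMeasurable.ite hN_meas stronglyMeasurable_condExp stronglyMeasurable_const
    refine stronglyMeasurable_of_tendsto atTop hn (tendsto_pi_nhds.2 fun ω => ?_)
    by_cases hω : ω ∈ N
    · simp only [if_pos hω]
      exact hglim x ω hω
    · simp only [if_neg hω]
      have : g x ω = 0 := by rw [hg_def]; simp [if_neg hω]
      rw [this]; exact tendsto_const_nhds
  -- a.e. equality with the conditional expectation
  have hgae : ∀ x, g x =ᵐ[μ] μ[f x | m] := by
    intro x
    have h1 : ∀ᵐ ω ∂μ, ∀ n : ℕ, |(μ[f (u x n) | m]) ω - (μ[f x | m]) ω| ≤ H (u x n) x :=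
      ae_all_iff.2 fun n => key (u x n) x
    filter_upwards [h1, hN_ae] with ω hω hωN
    have hH0 : Tendsto (fun n => H (u x n) x) atTop (𝓝 0) := by
      have h := (hHcont.tendsto (x, x)).comp ((hu_tend x).prodMk_nhds tendsto_const_nhds)
      simpa [hHdiag, Function.comp_def] using h
    have h2 : Tendsto (fun n => (μ[f (u x n) | m]) ω - (μ[f x | m]) ω) atTop (𝓝 0) :=
      squeeze_zero_norm (fun n => by simpa [Real.norm_eq_abs] using hω n) hH0
    have h3 := h2.add_const ((μ[f x | m]) ω)
    simp only [sub_add_cancel, zero_add] at h3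
    exact tendsto_nhds_unique (hglim x ω hωN) h3
  refine ⟨g, hgcont, hgmeas, hgae, ?_⟩
  -- uniqueness
  intro g' hg'cont hg'meas hg'ae
  have hDae : ∀ᵐ ω ∂μ, ∀ d ∈ D, g d ω = g' d ω :=
    (ae_ball_iff hDcount).2 fun d _ => (hgae d).trans (hg'ae d).symm
  filter_upwards [hDae] with ω hω
  intro x
  have := Continuous.ext_on hDdense (hgcont ω) (hg'cont ω) fun d hd => hω d hd
  exact congrFun this x
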